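/- Let k ∈ ℕ, let 0 = d₀ < d₁ < ⋯ < d_k be real numbers, and let p₀, p₁, …, p_k ∈ (0,1) with p₀ + p₁ + ⋯ + p_k = 1. Then there exist a compact metric space (S,d), a Borel probability measure μ on S, and a point ρ ∈ S such that the distance distribution of (S,d,μ) equals θ = p₀·δ₀ + p₁·δ_{d₁} + ⋯ + p_k·δ_{d_k}, and d(ρ, s) = d_k/2 for every point s in the support of μ. -/

import Mathlib

open MeasureTheory Finset



lemma exists_xy (ν : ℕ) (δ m : ℝ) (hδ : 0 < δ) (hm : 0 < m) (hm1 : m ≤ 1)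
    (hδm : δ ≤ m^2) (hν : 1 ≤ (ν:ℝ) * δ) :
    ∃ x y : ℝ, 0 ≤ x ∧ 0 ≤ y ∧ x + (ν:ℝ) * y = m ∧ x^2 + (ν:ℝ) * y^2 = δ := by
  have hm2 : m^2 ≤ 1 := by nlinarith
  have hνc : (0:ℝ) ≤ (ν:ℝ) := Nat.cast_nonneg ν
  have hνpos : (0:ℝ) < ν := by nlinarith [mul_nonneg hνc (sub_nonneg.mpr (le_of_lt (lt_of_lt_of_le hδ (le_of_eq rfl))))]
  have hinner : 0 ≤ (ν:ℝ) * (((ν:ℝ)+1)*δ - m^2) := by nlinarith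
  set c : ℝ := Real.sqrt ((ν:ℝ) * (((ν:ℝ)+1)*δ - m^2)) with hcdef
  have hcnn : 0 ≤ c := Real.sqrt_nonneg _
  have hc2 : c^2 = (ν:ℝ) * (((ν:ℝ)+1)*δ - m^2) := Real.sq_sqrt hinner
  set x : ℝ := (m + c)/((ν:ℝ)+1) with hxdef
  have hν1 : (0:ℝ) < (ν:ℝ)+1 := by positivity
  have hx0 : 0 ≤ x := by positivity
  have hcle : c ≤ (ν:ℝ) * m := by
    have h1 : c^2 ≤ ((ν:ℝ) * m)^2 := by
      rw [hc2]
      have h2 : 0 ≤ (ν:ℝ)*((ν:ℝ)+1)*(m^2-δ) :=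
        mul_nonneg (by positivity) (by linarith)
      nlinarith [h2]
    nlinarith [mul_nonneg hνpos.le hm.le]
  have hxm : x ≤ m := by
    rw [hxdef, div_le_iff₀ hν1]; nlinarith
  set y : ℝ := (m - x)/(ν:ℝ) with hydef
  have hy0 : 0 ≤ y := by
    apply div_nonneg _ hνpos.le; linarith
  have hsum : x + (ν:ℝ) * y = m := by
    rw [hydef, mul_div_cancel₀ _ (ne_of_gt hνpos)]; ring
  refine ⟨x, y, hx0, hy0, hsum, ?_⟩
  have hyx : (ν:ℝ) * y = m - x := by
    rw [hydef, mul_div_cancel₀ _ (ne_of_gt hνpos)]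
  have e1 : ((ν:ℝ)+1) * x = m + c := by
    rw [hxdef, mul_div_cancel₀ _ (ne_of_gt hν1)]
  have e2 : (((ν:ℝ)+1) * x - m)^2 = (ν:ℝ) * (((ν:ℝ)+1)*δ - m^2) := by
    rw [show ((ν:ℝ)+1) * x - m = c by linarith]; exact hc2
  have hy2 : (ν:ℝ) * ((ν:ℝ) * y^2) = (m - x)^2 := by
    rw [show (ν:ℝ) * ((ν:ℝ) * y^2) = ((ν:ℝ) * y)^2 by ring, hyx]
  have goal' : (ν:ℝ) * (x^2 + (ν:ℝ) * y^2) = (ν:ℝ) * δ := by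
    rw [mul_add, hy2]; nlinarith [e2]
  exact mul_left_cancel₀ (ne_of_gt hνpos) goal'

lemma exists_weights (k : ℕ) (p : Fin (k+1) → ℝ)
    (hp : ∀ i, p i ∈ Set.Ioo (0:ℝ) 1) (hp_sum : ∑ i, p i = 1) :
    ∃ (ν : ℕ) (M x y : ℕ → ℝ),
      0 < M 0 ∧ M k = 1 ∧ (∀ i, 0 ≤ M i) ∧
      (∀ ℓ, ℓ < k → 0 ≤ x ℓ) ∧ (∀ ℓ, ℓ < k → 0 ≤ y ℓ) ∧
      (∀ ℓ, ℓ < k → x ℓ + (ν:ℝ) * y ℓ = M (ℓ+1) - M ℓ) ∧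
      (∀ ℓ, (h : ℓ < k) → x ℓ^2 + (ν:ℝ) * y ℓ^2
          = M (ℓ+1)^2 - M ℓ^2 - p ⟨ℓ+1, by omega⟩) := by
  classical
  set δ : ℝ := min ((univ.inf' univ_nonempty fun i : Fin (k+1) => p i ^ 2) / 4)
      (p 0 / (4*(k+1))) with hδdef
  have hp0 : 0 < p 0 := (hp 0).1
  have hδpos : 0 < δ := by
    apply lt_min
    · have h2 : 0 < univ.inf' univ_nonempty fun i : Fin (k+1) => p i ^ 2 := by
        rw [Finset.lt_inf'_iff]
        intro i _
        have := (hp i).1; positivity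
      linarith
    · positivity
  have hδle : ∀ i : Fin (k+1), δ ≤ p i ^ 2 / 4 := fun i =>
    le_trans (min_le_left _ _) (by
      have := Finset.inf'_le (fun i : Fin (k+1) => p i ^ 2) (mem_univ i)
      linarith)
  have hδk : (k:ℝ) * δ < p 0 := by
    have h1 : δ ≤ p 0 / (4*(k+1)) := min_le_right _ _
    have hk0 : (0:ℝ) ≤ (k:ℝ) := Nat.cast_nonneg k
    have h2 : (k:ℝ) * δ ≤ (k:ℝ) * (p 0 / (4*(k+1))) :=
      mul_le_mul_of_nonneg_left h1 hk0
    have h3 : (k:ℝ) * (p 0 / (4*(k+1))) < p 0 := by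
      rw [mul_div_assoc']
      rw [div_lt_iff₀ (by positivity)]
      nlinarith
    linarith
  set q : ℕ → ℝ := fun i => if h : i < k+1 then p ⟨i,h⟩ else 0 with hqdef
  have hq : ∀ ℓ (h : ℓ < k+1), q ℓ = p ⟨ℓ, h⟩ := by intro ℓ h; rw [hqdef]; dsimp only; rw [dif_pos h]
  have hq0 : ∀ ℓ, 0 ≤ q ℓ := by
    intro ℓ; by_cases h : ℓ < k+1
    · rw [hq ℓ h]; exact (hp _).1.le
    · rw [hqdef]; dsimp only; rw [dif_neg h]
  have hqpos : ∀ ℓ, ℓ < k+1 → 0 < q ℓ := by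
    intro ℓ h; rw [hq ℓ h]; exact (hp _).1
  set F : ℕ → ℝ := fun j => ∑ i ∈ range (j+1), q i with hFdef
  have hFk : F k = 1 := by
    have h1 : F k = ∑ i : Fin (k+1), q i := (Fin.sum_univ_eq_sum_range q (k+1)).symm
    rw [h1, ← hp_sum]
    exact Finset.sum_congr rfl fun i _ => by
      rw [hq i i.isLt]
  have hFle : ∀ ℓ, ℓ ≤ k → F ℓ ≤ 1 := by
    intro ℓ hℓ
    rw [← hFk]
    apply Finset.sum_le_sum_of_subset_of_nonneg
    · exact Finset.range_subset_range.mpr (by omega)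
    · intro i _ _; exact hq0 i
  set G : ℕ → ℝ := fun j => F j - ((k - j : ℕ):ℝ) * δ with hGdef
  have hGstep : ∀ ℓ, ℓ < k → G (ℓ+1) = G ℓ + (q (ℓ+1) + δ) := by
    intro ℓ hℓ
    have hF : F (ℓ+1) = F ℓ + q (ℓ+1) := Finset.sum_range_succ q (ℓ+1)
    have hsub : k - ℓ = (k - (ℓ+1)) + 1 := by omega
    rw [hGdef]
    simp only [hF, hsub]
    push_cast
    ring
  have hG0 : G 0 = q 0 - (k:ℝ) * δ := by
    simp [hGdef, hFdef, Finset.sum_range_one]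
  have hG0pos : 0 < G 0 := by
    rw [hG0, hq 0 (by omega)]
    simpa using sub_pos.mpr hδk
  have hGpos : ∀ ℓ, ℓ ≤ k → 0 < G ℓ := by
    intro ℓ
    induction ℓ with
    | zero => intro _; exact hG0pos
    | succ n ih =>
      intro h
      rw [hGstep n (by omega)]
      have := ih (by omega)
      have := hqpos (n+1) (by omega)
      linarith
  have hGle1 : ∀ ℓ, ℓ ≤ k → G ℓ ≤ 1 := by
    intro ℓ hℓ
    have h1 : F ℓ ≤ 1 := hFle ℓ hℓ
    have h2 : (0:ℝ) ≤ ((k - ℓ : ℕ):ℝ) * δ := by positivity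
    rw [hGdef]; dsimp only; linarith
  set M : ℕ → ℝ := fun j => Real.sqrt (G j) with hMdef
  have hM0 : ∀ i, 0 ≤ M i := fun i => Real.sqrt_nonneg _
  have hM2 : ∀ ℓ, ℓ ≤ k → M ℓ ^ 2 = G ℓ := fun ℓ h => Real.sq_sqrt (hGpos ℓ h).le
  have hMpos : ∀ ℓ, ℓ ≤ k → 0 < M ℓ := fun ℓ h => Real.sqrt_pos.mpr (hGpos ℓ h)
  have hMle1 : ∀ ℓ, ℓ ≤ k → M ℓ ≤ 1 := by
    intro ℓ h
    rw [hMdef]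
    rw [show (1:ℝ) = Real.sqrt 1 by simp]
    exact Real.sqrt_le_sqrt (hGle1 ℓ h)
  have hMk : M k = 1 := by
    have hGk : G k = 1 := by
      rw [hGdef]; simp [hFk]
    rw [hMdef]; dsimp only; rw [hGk, Real.sqrt_one]
  have hstep2 : ∀ ℓ, ℓ < k → M (ℓ+1)^2 - M ℓ^2 = q (ℓ+1) + δ := by
    intro ℓ h
    rw [hM2 ℓ (by omega), hM2 (ℓ+1) (by omega), hGstep ℓ h]; ring
  have hmpos : ∀ ℓ, ℓ < k → 0 < M (ℓ+1) - M ℓ := by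
    intro ℓ h
    have h2 := hstep2 ℓ h
    have hq' := hqpos (ℓ+1) (by omega)
    have hMp := hMpos ℓ (by omega)
    have hMp' := hMpos (ℓ+1) (by omega)
    nlinarith
  have hmlb : ∀ ℓ, ℓ < k → q (ℓ+1) / 2 ≤ M (ℓ+1) - M ℓ := by
    intro ℓ h
    have h2 := hstep2 ℓ h
    have hu := hMle1 ℓ (by omega)
    have hu' := hMle1 (ℓ+1) (by omega)
    have hmp := hmpos ℓ h
    have key : (M (ℓ+1) + M ℓ) * (M (ℓ+1) - M ℓ) = q (ℓ+1) + δ := by nlinarith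
    have h5 : (M (ℓ+1) + M ℓ) * (M (ℓ+1) - M ℓ) ≤ 2 * (M (ℓ+1) - M ℓ) := by
      apply mul_le_mul_of_nonneg_right _ hmp.le
      linarith
    linarith [hδpos]
  have hδm : ∀ ℓ, ℓ < k → δ ≤ (M (ℓ+1) - M ℓ)^2 := by
    intro ℓ h
    have h1 := hmlb ℓ h
    have h2 := hδle ⟨ℓ+1, by omega⟩
    have h3 := hq (ℓ+1) (by omega)
    have h4 := hqpos (ℓ+1) (by omega)
    rw [h3] at h1 h4
    nlinarith [sq_nonneg (M (ℓ+1) - M ℓ)]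
  have hm1 : ∀ ℓ, ℓ < k → M (ℓ+1) - M ℓ ≤ 1 := by
    intro ℓ h
    have := hMle1 (ℓ+1) (by omega)
    have := hMpos ℓ (by omega)
    linarith
  set ν : ℕ := ⌈1/δ⌉₊ with hνdef
  have hνδ : 1 ≤ (ν:ℝ) * δ := by
    have h1 : 1/δ ≤ (ν:ℝ) := Nat.le_ceil _
    calc (1:ℝ) = (1/δ) * δ := by field_simp
    _ ≤ (ν:ℝ) * δ := by nlinarith
  have H : ∀ ℓ, ℓ < k → ∃ x y : ℝ, 0 ≤ x ∧ 0 ≤ y ∧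
      x + (ν:ℝ) * y = M (ℓ+1) - M ℓ ∧ x^2 + (ν:ℝ) * y^2 = δ := by
    intro ℓ h
    exact exists_xy ν δ (M (ℓ+1) - M ℓ) hδpos (hmpos ℓ h) (hm1 ℓ h) (hδm ℓ h) hνδ
  choose Xf Yf hX0 hY0 hP3 hP4 using H
  refine ⟨ν, M, (fun ℓ => if h : ℓ < k then Xf ℓ h else 0),
      (fun ℓ => if h : ℓ < k then Yf ℓ h else 0),
      hMpos 0 (by omega), hMk, hM0, ?_, ?_, ?_, ?_⟩
  · intro ℓ h; simp only [dif_pos h]; exact hX0 ℓ h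
  · intro ℓ h; simp only [dif_pos h]; exact hY0 ℓ h
  · intro ℓ h; simp only [dif_pos h]; exact hP3 ℓ h
  · intro ℓ h
    simp only [dif_pos h]
    rw [hP4 ℓ h, hstep2 ℓ h, hq (ℓ+1) (by omega)]
    ring


abbrev Tsp (k ν : ℕ) : Type := Option (Fin k × Fin (ν+1))
abbrev Ssp (k ν : ℕ) : Type := Option (Tsp k ν)

def lvl {k ν : ℕ} : Tsp k ν → ℕ
  | none => 0
  | some (ℓ, _) => ℓ.1 + 1

def clsT {k ν : ℕ} (a b : Tsp k ν) : ℕ :=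
  if a = b then 0 else max (lvl a) (lvl b)

noncomputable def dd (k : ℕ) (d : Fin (k+1) → ℝ) (i : ℕ) : ℝ := d ⟨min i k, by omega⟩

noncomputable def DS (k ν : ℕ) (d : Fin (k+1) → ℝ) : Ssp k ν → Ssp k ν → ℝ
  | none, none => 0
  | none, some _ => d (Fin.last k) / 2
  | some _, none => d (Fin.last k) / 2
  | some a, some b => dd k d (clsT a b)

section facts
variable {k ν : ℕ} {d : Fin (k+1) → ℝ}

lemma dd_mono (hmono : StrictMono d) : Monotone (dd k d) := by
  intro i j hij
  exact hmono.monotone (by simp [Fin.le_def]; omega)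

lemma dd_zero (hd0 : d 0 = 0) : dd k d 0 = 0 := by
  simp only [dd]
  convert hd0 using 2
  simp [Fin.ext_iff]

lemma dd_nonneg (hd0 : d 0 = 0) (hmono : StrictMono d) (i : ℕ) : 0 ≤ dd k d i := by
  rw [← dd_zero (d := d) hd0]
  exact dd_mono hmono (Nat.zero_le i)

lemma dd_le_last (hmono : StrictMono d) (i : ℕ) : dd k d i ≤ d (Fin.last k) := by
  apply hmono.monotone
  simp [Fin.le_def, Fin.last]

lemma dd_pos (hd0 : d 0 = 0) (hmono : StrictMono d) (hk : 0 < k) {i : ℕ} (hi : 0 < i) :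
    0 < dd k d i := by
  rw [← hd0]
  apply hmono
  simp [Fin.lt_def]; omega

lemma d_last_pos (hd0 : d 0 = 0) (hmono : StrictMono d) (hk : 0 < k) :
    0 < d (Fin.last k) := by
  rw [← hd0]
  apply hmono
  simp [Fin.lt_def, Fin.last]; omega

lemma lvl_le (a : Tsp k ν) : lvl a ≤ k := by
  match a with
  | none => simp [lvl]
  | some (ℓ, t) => simp [lvl]

lemma lvl_eq_zero {a : Tsp k ν} (h : lvl a = 0) : a = none := by
  match a with
  | none => rfl
  | some (ℓ, t) => simp [lvl] at h

lemma clsT_le (a b : Tsp k ν) : clsT a b ≤ k := by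
  unfold clsT
  split
  · omega
  · exact max_le (lvl_le a) (lvl_le b)

lemma clsT_comm (a b : Tsp k ν) : clsT a b = clsT b a := by
  unfold clsT
  by_cases h : a = b
  · simp [h]
  · rw [if_neg h, if_neg (fun h' => h h'.symm), max_comm]

lemma clsT_eq_zero {a b : Tsp k ν} : clsT a b = 0 ↔ a = b := by
  constructor
  · intro h
    unfold clsT at h
    by_cases hab : a = b
    · exact hab
    · rw [if_neg hab] at h
      rw [lvl_eq_zero (Nat.max_eq_zero_iff.mp h).1, lvl_eq_zero (Nat.max_eq_zero_iff.mp h).2]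
  · intro h; simp [clsT, h]

lemma clsT_pos {a b : Tsp k ν} (h : a ≠ b) : 0 < clsT a b := by
  rcases Nat.eq_zero_or_pos (clsT a b) with h0 | h0
  · exact absurd (clsT_eq_zero.mp h0) h
  · exact h0

lemma DS_self (hd0 : d 0 = 0) (a : Ssp k ν) : DS k ν d a a = 0 := by
  match a with
  | none => rfl
  | some a' => show dd k d (clsT a' a') = 0; rw [clsT_eq_zero.mpr rfl, dd_zero hd0]

lemma DS_comm (a b : Ssp k ν) : DS k ν d a b = DS k ν d b a := by
  match a, b with
  | none, none => rfl
  | none, some _ => rfl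
  | some _, none => rfl
  | some a', some b' => show dd k d (clsT a' b') = dd k d (clsT b' a'); rw [clsT_comm]

lemma DS_nonneg (hd0 : d 0 = 0) (hmono : StrictMono d) (hk : 0 < k) (a b : Ssp k ν) : 0 ≤ DS k ν d a b := by
  match a, b with
  | none, none => exact le_refl 0
  | none, some _ => exact le_of_lt (by have := d_last_pos hd0 hmono hk; simpa [DS] using by linarith)
  | some _, none => exact le_of_lt (by have := d_last_pos hd0 hmono hk; simpa [DS] using by linarith)
  | some a', some b' => exact dd_nonneg hd0 hmono _

lemma DS_triangle (hd0 : d 0 = 0) (hmono : StrictMono d) (hk : 0 < k) (a b c : Ssp k ν) :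
    DS k ν d a c ≤ DS k ν d a b + DS k ν d b c := by
  have hlast := d_last_pos hd0 hmono hk
  match a, b, c with
  | none, none, none => simp [DS]
  | none, none, some _ => simp [DS]
  | none, some b', none => simp [DS]; linarith
  | none, some b', some c' =>
      show d (Fin.last k)/2 ≤ d (Fin.last k)/2 + dd k d (clsT b' c')
      have := dd_nonneg (k := k) (d := d) hd0 hmono (clsT b' c'); linarith
  | some a', none, none => show d (Fin.last k)/2 ≤ d (Fin.last k)/2 + 0; linarith
  | some a', none, some c' =>
      show dd k d (clsT a' c') ≤ d (Fin.last k)/2 + d (Fin.last k)/2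
      have := dd_le_last (k := k) (d := d) hmono (clsT a' c'); linarith
  | some a', some b', none =>
      show d (Fin.last k)/2 ≤ dd k d (clsT a' b') + d (Fin.last k)/2
      have := dd_nonneg (k := k) (d := d) hd0 hmono (clsT a' b'); linarith
  | some a', some b', some c' =>
      show dd k d (clsT a' c') ≤ dd k d (clsT a' b') + dd k d (clsT b' c')
      have h1 := dd_nonneg (k := k) (d := d) hd0 hmono (clsT a' b')
      have h2 := dd_nonneg (k := k) (d := d) hd0 hmono (clsT b' c')
      by_cases hac : a' = c'
      · rw [clsT_eq_zero.mpr hac, dd_zero hd0]; linarith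
      · by_cases hab : a' = b'
        · rw [hab, clsT_eq_zero.mpr rfl, dd_zero hd0]; subst hab; linarith
        · by_cases hbc : b' = c'
          · rw [hbc, clsT_eq_zero.mpr rfl, dd_zero hd0]; subst hbc; linarith
          · have e1 : clsT a' c' = max (lvl a') (lvl c') := if_neg hac
            have e2 : clsT a' b' = max (lvl a') (lvl b') := if_neg hab
            have e3 : clsT b' c' = max (lvl b') (lvl c') := if_neg hbc
            rcases le_or_gt (lvl c') (lvl a') with h | h
            · have : clsT a' c' ≤ clsT a' b' := by rw [e1, e2]; omega
              have := dd_mono (k := k) hmono this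
              linarith
            · have : clsT a' c' ≤ clsT b' c' := by rw [e1, e3]; omega
              have := dd_mono (k := k) hmono this
              linarith

lemma DS_eq_zero (hd0 : d 0 = 0) (hmono : StrictMono d) (hk : 0 < k) {a b : Ssp k ν} (h : DS k ν d a b = 0) : a = b := by
  have hlast := d_last_pos hd0 hmono hk
  match a, b with
  | none, none => rfl
  | none, some _ => exact absurd h (by show ¬ (d (Fin.last k)/2 = 0); linarith)
  | some _, none => exact absurd h (by show ¬ (d (Fin.last k)/2 = 0); linarith)
  | some a', some b' =>
      by_cases hab : a' = b'
      · rw [hab]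
      · exfalso
        have := dd_pos (k := k) (d := d) hd0 hmono hk (clsT_pos hab)
        rw [show DS k ν d (some a') (some b') = dd k d (clsT a' b') from rfl] at h
        linarith

end facts

noncomputable def metricS (k ν : ℕ) (d : Fin (k+1) → ℝ) (hd0 : d 0 = 0)
    (hmono : StrictMono d) (hk : 0 < k) : MetricSpace (Ssp k ν) where
  dist := DS k ν d
  dist_self := DS_self hd0
  dist_comm := DS_comm
  dist_triangle := DS_triangle hd0 hmono hk
  eq_of_dist_eq_zero := DS_eq_zero hd0 hmono hk


def wTf (k ν : ℕ) (c : ℝ) (u v : ℕ → ℝ) : Tsp k ν → ℝ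
  | none => c
  | some (ℓ, t) => if t = 0 then u ℓ.1 else v ℓ.1

section sums
variable {k ν : ℕ} {c : ℝ} {u v : ℕ → ℝ}

lemma sum_fin_ite (x y : ℝ) : ∑ t : Fin (ν+1), (if t = 0 then x else y) = x + ν * y := by
  rw [Fin.sum_univ_succ]
  simp [Fin.succ_ne_zero, Finset.sum_const, Finset.card_univ, nsmul_eq_mul]

lemma sum_tsp (f : Tsp k ν → ℝ) :
    ∑ a, f a = f none + ∑ ℓ : Fin k, ∑ t : Fin (ν+1), f (some (ℓ, t)) := by
  rw [Fintype.sum_option]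
  congr 1
  rw [Fintype.sum_prod_type]

lemma sum_range_ite_lt (g : ℕ → ℝ) {i k : ℕ} (h : i ≤ k) :
    ∑ ℓ ∈ range k, (if ℓ < i then g ℓ else 0) = ∑ ℓ ∈ range i, g ℓ := by
  rw [← Finset.sum_subset (Finset.range_subset_range.mpr h)
    (fun x _ hx => by rw [if_neg (by simpa using hx)])]
  exact Finset.sum_congr rfl fun x hx => if_pos (mem_range.mp hx)

lemma sum_range_ite_eq (g : ℕ → ℝ) {j k : ℕ} (h : j < k) :
    ∑ ℓ ∈ range k, (if ℓ = j then g ℓ else 0) = g j := by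
  rw [Finset.sum_ite_eq' (range k) j g]
  simp [h]

-- total sum of weights
lemma sum_wTf : ∑ a, wTf k ν c u v a = c + ∑ ℓ ∈ range k, (u ℓ + ν * v ℓ) := by
  rw [sum_tsp]
  congr 1
  rw [← Fin.sum_univ_eq_sum_range (fun ℓ => u ℓ + ν * v ℓ) k]
  exact Finset.sum_congr rfl fun ℓ _ => by
    show ∑ t : Fin (ν+1), wTf k ν c u v (some (ℓ, t)) = _
    rw [show (fun t => wTf k ν c u v (some (ℓ, t))) = fun t : Fin (ν+1) =>
      if t = 0 then u ℓ.1 else v ℓ.1 from rfl, sum_fin_ite]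

-- sum of weights at levels ≤ i
lemma sum_wTf_le {i : ℕ} (hik : i ≤ k) :
    ∑ a, (if lvl a ≤ i then wTf k ν c u v a else 0)
      = c + ∑ ℓ ∈ range i, (u ℓ + ν * v ℓ) := by
  rw [sum_tsp]
  congr 1
  rw [← sum_range_ite_lt (fun ℓ => u ℓ + ν * v ℓ) hik,
    ← Fin.sum_univ_eq_sum_range (fun ℓ => if ℓ < i then u ℓ + ν * v ℓ else 0) k]
  refine Finset.sum_congr rfl fun ℓ _ => ?_
  by_cases h : (ℓ:ℕ) < i
  · rw [if_pos h, ← sum_fin_ite (u ℓ.1) (v ℓ.1)]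
    exact Finset.sum_congr rfl fun t _ => by
      show (if lvl (some (ℓ, t)) ≤ i then _ else _) = _
      rw [if_pos (by simp [lvl]; omega)]
      rfl
  · rw [if_neg h]
    refine Finset.sum_eq_zero fun t _ => ?_
    show (if lvl (some (ℓ, t)) ≤ i then _ else _) = _
    rw [if_neg (by simp [lvl]; omega)]

-- sum of weights at level exactly i, for 0 < i ≤ k
lemma sum_wTf_eq {i : ℕ} (hi : 0 < i) (hik : i ≤ k) :
    ∑ a, (if lvl a = i then wTf k ν c u v a else 0)
      = u (i-1) + ν * v (i-1) := by
  rw [sum_tsp]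
  rw [show (if lvl (none : Tsp k ν) = i then wTf k ν c u v none else 0) = 0 by
    rw [if_neg (by simp [lvl]; omega)]]
  rw [zero_add]
  rw [← sum_range_ite_eq (fun ℓ => u ℓ + ν * v ℓ) (show i-1 < k by omega),
    ← Fin.sum_univ_eq_sum_range (fun ℓ => if ℓ = i-1 then u ℓ + ν * v ℓ else 0) k]
  refine Finset.sum_congr rfl fun ℓ _ => ?_
  by_cases h : (ℓ:ℕ) = i-1
  · rw [if_pos h, ← sum_fin_ite (u ℓ.1) (v ℓ.1)]
    exact Finset.sum_congr rfl fun t _ => by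
      show (if lvl (some (ℓ, t)) = i then _ else _) = _
      rw [if_pos (by simp [lvl]; omega)]
      rfl
  · rw [if_neg h]
    refine Finset.sum_eq_zero fun t _ => ?_
    show (if lvl (some (ℓ, t)) = i then _ else _) = _
    rw [if_neg (by simp [lvl]; omega)]

end sums

section main
open ENNReal

lemma main_pos (k : ℕ) (hk : 0 < k) (d : Fin (k + 1) → ℝ) (hd0 : d 0 = 0) (hd_mono : StrictMono d)
    (p : Fin (k + 1) → ℝ) (hp : ∀ i, p i ∈ Set.Ioo (0 : ℝ) 1) (hp_sum : ∑ i, p i = 1) :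
    ∃ (S : Type) (_ : MetricSpace S) (_ : MeasurableSpace S) (_ : BorelSpace S)
      (μ : Measure S) (_ : IsProbabilityMeasure μ) (ρ : S),
      CompactSpace S ∧
      (μ.prod μ).map (fun q : S × S => dist q.1 q.2)
        = ∑ i, ENNReal.ofReal (p i) • Measure.dirac (d i) ∧
      ∀ s : S, (∀ r : ℝ, 0 < r → 0 < μ (Metric.ball s r)) →
        dist ρ s = d (Fin.last k) / 2 := by
  classical
  obtain ⟨ν, M, X, Y, hM0pos, hMk, hMnn, hX0, hY0, hP3, hP4⟩ := exists_weights k p hp hp_sum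
  letI iM : MetricSpace (Ssp k ν) := metricS k ν d hd0 hd_mono hk
  haveI : DiscreteTopology (Ssp k ν) := inferInstance
  letI imeas : MeasurableSpace (Ssp k ν) := ⊤
  haveI iB : BorelSpace (Ssp k ν) := ⟨(borel_eq_top_of_discrete (α := Ssp k ν)).symm⟩
  haveI : MeasurableSingletonClass (Ssp k ν) :=
    ⟨fun _ => MeasurableSpace.measurableSet_top⟩
  -- abbreviations
  set P : ℕ → ℝ := fun i => if h : i < k+1 then p ⟨i, h⟩ else 0 with hPdef
  have hPval : ∀ i (h : i < k+1), P i = p ⟨i, h⟩ := by intro i h; rw [hPdef]; dsimp only; rw [dif_pos h]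
  set wT : Tsp k ν → ℝ := wTf k ν (M 0) X Y with hwTdef
  have hwT0 : ∀ a : Tsp k ν, 0 ≤ wT a := by
    intro a
    match a with
    | none => exact hMnn 0
    | some (ℓ, t) =>
        show (0:ℝ) ≤ if t = 0 then X ℓ.1 else Y ℓ.1
        split_ifs
        · exact hX0 ℓ.1 ℓ.2
        · exact hY0 ℓ.1 ℓ.2
  set w : Ssp k ν → ℝ≥0∞ := fun a => ENNReal.ofReal (Option.elim a 0 wT) with hwdef
  have hwnone : w none = 0 := by simp [hwdef]
  have hwsome : ∀ a : Tsp k ν, w (some a) = ENNReal.ofReal (wT a) := by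
    intro a; simp [hwdef]
  set μ : Measure (Ssp k ν) := ∑ a : Ssp k ν, w a • Measure.dirac a with hμdef
  -- numeric identities
  have hPsum : ∑ ℓ ∈ range (k+1), P ℓ = 1 := by
    rw [← hp_sum, ← Fin.sum_univ_eq_sum_range P (k+1)]
    exact Finset.sum_congr rfl fun i _ => by rw [hPval i i.isLt]
  have hPsum' : ∑ ℓ ∈ range k, P (ℓ+1) = 1 - P 0 := by
    have := Finset.sum_range_succ' P k
    rw [hPsum] at this
    linarith [this]
  have hP4' : ∀ ℓ, ℓ < k → X ℓ^2 + (ν:ℝ) * Y ℓ^2 = M (ℓ+1)^2 - M ℓ^2 - P (ℓ+1) := by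
    intro ℓ h
    rw [hP4 ℓ h, hPval (ℓ+1) (by omega)]
  have hN1 : M 0 + ∑ ℓ ∈ range k, (X ℓ + (ν:ℝ) * Y ℓ) = 1 := by
    rw [show ∑ ℓ ∈ range k, (X ℓ + (ν:ℝ) * Y ℓ) = ∑ ℓ ∈ range k, (M (ℓ+1) - M ℓ) from
      Finset.sum_congr rfl fun ℓ hℓ => hP3 ℓ (mem_range.mp hℓ)]
    rw [Finset.sum_range_sub M k, hMk]
    ring
  have hN3 : ∀ i, i ≤ k → M 0 + ∑ ℓ ∈ range i, (X ℓ + (ν:ℝ) * Y ℓ) = M i := by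
    intro i hi
    rw [show ∑ ℓ ∈ range i, (X ℓ + (ν:ℝ) * Y ℓ) = ∑ ℓ ∈ range i, (M (ℓ+1) - M ℓ) from
      Finset.sum_congr rfl fun ℓ hℓ => hP3 ℓ (by have := mem_range.mp hℓ; omega)]
    rw [Finset.sum_range_sub M i]
    ring
  have hN2 : M 0^2 + ∑ ℓ ∈ range k, (X ℓ^2 + (ν:ℝ) * Y ℓ^2) = P 0 := by
    rw [show ∑ ℓ ∈ range k, (X ℓ^2 + (ν:ℝ) * Y ℓ^2)
        = ∑ ℓ ∈ range k, ((M (ℓ+1)^2 - M ℓ^2) - P (ℓ+1)) from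
      Finset.sum_congr rfl fun ℓ hℓ => by
        rw [hP4' ℓ (mem_range.mp hℓ)]]
    rw [Finset.sum_sub_distrib, Finset.sum_range_sub (fun i => M i ^2) k, hPsum', hMk]
    ring
  -- square weight function
  have hsq : ∀ a : Tsp k ν, wT a ^ 2
      = wTf k ν (M 0^2) (fun ℓ => X ℓ^2) (fun ℓ => Y ℓ^2) a := by
    intro a
    match a with
    | none => rfl
    | some (ℓ, t) =>
        show (if t = 0 then X ℓ.1 else Y ℓ.1)^2 = if t = 0 then X ℓ.1^2 else Y ℓ.1^2
        split_ifs <;> rfl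
  -- key sums
  have hdiag : ∑ a : Tsp k ν, wT a ^ 2 = P 0 := by
    rw [Finset.sum_congr rfl fun a _ => hsq a, sum_wTf]
    rw [show ∑ ℓ ∈ range k, (X ℓ^2 + (ν:ℝ) * Y ℓ^2)
        = ∑ ℓ ∈ range k, (X ℓ^2 + (ν:ℝ) * Y ℓ^2) from rfl] at hN2 ⊢
    exact hN2
  have hPS : ∀ i, i ≤ k → ∑ a : Tsp k ν, (if lvl a ≤ i then wT a else 0) = M i := by
    intro i hi
    rw [hwTdef, sum_wTf_le hi]
    exact hN3 i hi
  have hLS : ∀ i, 0 < i → i ≤ k →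
      ∑ a : Tsp k ν, (if lvl a = i then wT a ^ 2 else 0)
        = M i^2 - M (i-1)^2 - P i := by
    intro i hi hik
    rw [Finset.sum_congr rfl fun a _ => by rw [hsq a], sum_wTf_eq hi hik]
    have h1 : i - 1 + 1 = i := by omega
    have := hP4' (i-1) (by omega)
    rw [h1] at this
    linarith [this]
  -- fiber identities
  have hK0 : ∑ a : Tsp k ν, ∑ b : Tsp k ν,
      (if clsT a b = 0 then wT a * wT b else 0) = P 0 := by
    rw [← hdiag]
    refine Finset.sum_congr rfl fun a _ => ?_
    rw [show (fun b => if clsT a b = 0 then wT a * wT b else 0)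
        = fun b => if b = a then wT a * wT b else 0 from funext fun b => by
      by_cases h : b = a
      · subst h; rw [if_pos (clsT_eq_zero.mpr rfl), if_pos rfl]
      · rw [if_neg (fun hc => h (clsT_eq_zero.mp hc).symm), if_neg h]]
    rw [Finset.sum_ite_eq' univ a (fun b => wT a * wT b), if_pos (mem_univ a)]
    ring
  have hKi : ∀ i, 0 < i → i ≤ k → ∑ a : Tsp k ν, ∑ b : Tsp k ν,
      (if clsT a b = i then wT a * wT b else 0) = P i := by
    intro i hi hik
    have hpt : ∀ a b : Tsp k ν, (if clsT a b = i then wT a * wT b else 0)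
        = (if lvl a ≤ i then wT a else 0) * (if lvl b ≤ i then wT b else 0)
          - (if lvl a ≤ i-1 then wT a else 0) * (if lvl b ≤ i-1 then wT b else 0)
          - (if b = a ∧ lvl a = i then wT a * wT b else 0) := by
      intro a b
      by_cases hab : a = b
      · subst hab
        rw [show clsT a a = 0 from clsT_eq_zero.mpr rfl]
        rw [if_neg (by omega)]
        simp only [true_and]
        split_ifs <;> (try (exfalso; omega)) <;> ring
      · rw [show clsT a b = max (lvl a) (lvl b) from if_neg hab,
          if_neg (fun hc : b = a ∧ _ => hab hc.1.symm)]
        split_ifs <;> (try (exfalso; omega)) <;> ring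
    rw [Finset.sum_congr rfl fun a _ => Finset.sum_congr rfl fun b _ => hpt a b]
    simp_rw [Finset.sum_sub_distrib]
    rw [← Finset.sum_mul_sum univ univ (fun a => if lvl a ≤ i then wT a else 0)
        (fun b => if lvl b ≤ i then wT b else 0)]
    rw [← Finset.sum_mul_sum univ univ (fun a => if lvl a ≤ i-1 then wT a else 0)
        (fun b => if lvl b ≤ i-1 then wT b else 0)]
    rw [hPS i hik, hPS (i-1) (by omega)]
    have hdiagsum : ∑ a : Tsp k ν, ∑ b : Tsp k ν,
        (if b = a ∧ lvl a = i then wT a * wT b else 0)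
        = ∑ a : Tsp k ν, (if lvl a = i then wT a ^ 2 else 0) := by
      refine Finset.sum_congr rfl fun a _ => ?_
      by_cases hlv : lvl a = i
      · have h1 : ∀ b : Tsp k ν, (if b = a ∧ lvl a = i then wT a * wT b else 0)
            = (if b = a then wT a * wT b else 0) := fun b => by simp [hlv]
        rw [Finset.sum_congr rfl fun b _ => h1 b,
          Finset.sum_ite_eq' univ a (fun b => wT a * wT b), if_pos (mem_univ a), if_pos hlv]
        ring
      · rw [if_neg hlv]
        exact Finset.sum_eq_zero fun b _ => by
          rw [if_neg (fun hc : _ ∧ _ => hlv hc.2)]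
    rw [hdiagsum, hLS i hi hik]
    ring
  -- probability measure
  have hwTsum : ∑ a : Tsp k ν, wT a = 1 := by
    rw [hwTdef, sum_wTf]; exact hN1
  have hwsum : ∑ a : Ssp k ν, w a = 1 := by
    rw [Fintype.sum_option, hwnone, zero_add]
    calc ∑ a : Tsp k ν, w (some a) = ∑ a : Tsp k ν, ENNReal.ofReal (wT a) :=
          Finset.sum_congr rfl fun a _ => hwsome a
    _ = ENNReal.ofReal (∑ a : Tsp k ν, wT a) :=
          (ENNReal.ofReal_sum_of_nonneg (fun a _ => hwT0 a)).symm
    _ = 1 := by rw [hwTsum, ENNReal.ofReal_one]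
  have hμset : ∀ (A : Set (Ssp k ν)), μ A = ∑ b : Ssp k ν, w b * (if b ∈ A then 1 else 0) := by
    intro A
    rw [hμdef, Measure.finset_sum_apply]
    refine Finset.sum_congr rfl fun b _ => ?_
    rw [Measure.smul_apply, Measure.dirac_apply' _ (MeasurableSpace.measurableSet_top),
      smul_eq_mul]
    simp [Set.indicator_apply]
  haveI hprob : IsProbabilityMeasure μ := by
    constructor
    rw [hμset Set.univ]
    simp only [Set.mem_univ, if_true, mul_one]
    exact hwsum
  have hμnone : μ {(none : Ssp k ν)} = 0 := by
    rw [hμset {none}]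
    rw [Fintype.sum_option, hwnone, zero_mul, zero_add]
    refine Finset.sum_eq_zero fun b _ => ?_
    rw [if_neg (by simp), mul_zero]
  have hfmeas : Measurable (fun q : Ssp k ν × Ssp k ν => dist q.1 q.2) :=
    measurable_of_countable _
  refine ⟨Ssp k ν, iM, imeas, iB, μ, hprob, none, inferInstance, ?_, ?_⟩
  · -- the distance distribution
    ext E hE
    rw [Measure.map_apply hfmeas hE, Measure.prod_apply (hfmeas hE)]
    rw [hμdef, lintegral_finset_sum_measure]
    simp_rw [lintegral_smul_measure, lintegral_dirac]
    have hslice : ∀ a : Ssp k ν, μ (Prod.mk a ⁻¹' ((fun q : Ssp k ν × Ssp k ν => dist q.1 q.2) ⁻¹' E))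
        = ∑ b : Ssp k ν, w b * (if DS k ν d a b ∈ E then 1 else 0) := by
      intro a
      rw [hμset]
      rfl
    have hnn : ∀ (i : ℕ) (a b : Tsp k ν), 0 ≤ (if clsT a b = i then wT a * wT b else 0) := by
      intro i a b
      split_ifs
      · exact mul_nonneg (hwT0 a) (hwT0 b)
      · exact le_refl 0
    have hRHS : (∑ i : Fin (k+1), ENNReal.ofReal (p i) • (Measure.dirac (d i) : Measure ℝ)) E
        = ∑ i ∈ range (k+1), ENNReal.ofReal (P i) * (if dd k d i ∈ E then 1 else 0) := by
      rw [Measure.finset_sum_apply]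
      rw [← Fin.sum_univ_eq_sum_range
        (fun i => ENNReal.ofReal (P i) * (if dd k d i ∈ E then 1 else 0)) (k+1)]
      refine Finset.sum_congr rfl fun i _ => ?_
      rw [Measure.smul_apply, Measure.dirac_apply' _ hE, smul_eq_mul]
      have hdd : dd k d ↑i = d i := by
        unfold dd
        congr 1
        apply Fin.ext
        simp
        omega
      have hP : P ↑i = p i := by rw [hPval ↑i i.isLt]
      rw [hdd, hP, Set.indicator_apply]
      split_ifs <;> simp
    rw [hRHS]
    calc ∑ a : Ssp k ν, w a * μ (Prod.mk a ⁻¹' ((fun q : Ssp k ν × Ssp k ν => dist q.1 q.2) ⁻¹' E))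
        = ∑ a : Ssp k ν, w a * ∑ b : Ssp k ν, w b * (if DS k ν d a b ∈ E then 1 else 0) :=
          Finset.sum_congr rfl fun a _ => by rw [hslice a]
      _ = ∑ a : Tsp k ν, w (some a) * ∑ b : Ssp k ν, w b * (if DS k ν d (some a) b ∈ E then 1 else 0) := by
          rw [Fintype.sum_option, hwnone, zero_mul, zero_add]
      _ = ∑ a : Tsp k ν, ∑ b : Tsp k ν, ENNReal.ofReal (wT a) *
            (ENNReal.ofReal (wT b) * (if dd k d (clsT a b) ∈ E then 1 else 0)) := by
          refine Finset.sum_congr rfl fun a _ => ?_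
          rw [hwsome, Fintype.sum_option, hwnone, zero_mul, zero_add, Finset.mul_sum]
          refine Finset.sum_congr rfl fun b _ => ?_
          rw [hwsome b]
          rfl
      _ = ∑ a : Tsp k ν, ∑ b : Tsp k ν, ∑ i ∈ range (k+1),
            (if clsT a b = i then ENNReal.ofReal (wT a * wT b) else 0)
              * (if dd k d i ∈ E then 1 else 0) := by
          refine Finset.sum_congr rfl fun a _ => Finset.sum_congr rfl fun b _ => ?_
          rw [← mul_assoc, ← ENNReal.ofReal_mul (hwT0 a)]
          have hstep : ∀ i, (if clsT a b = i then ENNReal.ofReal (wT a * wT b) else 0)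
              * (if dd k d i ∈ E then 1 else 0)
              = (if clsT a b = i then
                  ENNReal.ofReal (wT a * wT b) * (if dd k d i ∈ E then 1 else 0) else 0) := by
            intro i; split_ifs <;> simp
          rw [Finset.sum_congr rfl fun i _ => hstep i]
          rw [Finset.sum_ite_eq (range (k+1)) (clsT a b)
            (fun i => ENNReal.ofReal (wT a * wT b) * (if dd k d i ∈ E then 1 else 0))]
          rw [if_pos (mem_range.mpr (by have := clsT_le a b; omega))]
      _ = ∑ i ∈ range (k+1), ∑ a : Tsp k ν, ∑ b : Tsp k ν,
            (if clsT a b = i then ENNReal.ofReal (wT a * wT b) else 0)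
              * (if dd k d i ∈ E then 1 else 0) := by
          rw [Finset.sum_congr rfl fun a (_ : a ∈ univ) => Finset.sum_comm]
          exact Finset.sum_comm
      _ = ∑ i ∈ range (k+1), ENNReal.ofReal (P i) * (if dd k d i ∈ E then 1 else 0) := by
          refine Finset.sum_congr rfl fun i hi => ?_
          have hik : i ≤ k := by have := mem_range.mp hi; omega
          rw [show (∑ a : Tsp k ν, ∑ b : Tsp k ν,
              (if clsT a b = i then ENNReal.ofReal (wT a * wT b) else 0)
                * (if dd k d i ∈ E then 1 else 0))
              = (∑ a : Tsp k ν, ∑ b : Tsp k ν,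
                (if clsT a b = i then ENNReal.ofReal (wT a * wT b) else 0))
                * (if dd k d i ∈ E then 1 else 0) from by
            rw [Finset.sum_mul]
            exact Finset.sum_congr rfl fun a _ => by rw [Finset.sum_mul]]
          congr 1
          have h1 : ∀ a b : Tsp k ν, (if clsT a b = i then ENNReal.ofReal (wT a * wT b) else 0)
              = ENNReal.ofReal (if clsT a b = i then wT a * wT b else 0) := by
            intro a b
            split_ifs
            · rfl
            · rw [ENNReal.ofReal_zero]
          rw [Finset.sum_congr rfl fun a _ => Finset.sum_congr rfl fun b _ => h1 a b]
          rw [Finset.sum_congr rfl fun a (_ : a ∈ univ) =>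
            (ENNReal.ofReal_sum_of_nonneg (fun b _ => hnn i a b)).symm]
          rw [← ENNReal.ofReal_sum_of_nonneg
            (fun a _ => Finset.sum_nonneg fun b _ => hnn i a b)]
          congr 1
          rcases Nat.eq_zero_or_pos i with hi0 | hi0
          · subst hi0; exact hK0
          · exact hKi i hi0 hik
  · -- the root condition
    intro s hball
    match s with
    | some t => rfl
    | none =>
        exfalso
        have hlast := d_last_pos hd0 hd_mono hk
        have h1 := hball (d (Fin.last k) / 2) (by linarith)
        have h2 : Metric.ball (none : Ssp k ν) (d (Fin.last k) / 2) = {none} := by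
          ext b
          simp only [Metric.mem_ball, Set.mem_singleton_iff]
          constructor
          · intro hb
            match b with
            | none => rfl
            | some b' =>
                exfalso
                have : dist (some b' : Ssp k ν) none = d (Fin.last k) / 2 := rfl
                rw [this] at hb
                exact lt_irrefl _ hb
          · intro hb; subst hb
            rw [dist_self]; linarith
        rw [h2, hμnone] at h1
        exact lt_irrefl _ h1
end main

/-- Proposition 4 of the paper. Let `k ∈ ℕ`, let `0 = d₀ < d₁ < ⋯ < d_k`
be real numbers, and let `p₀, …, p_k ∈ (0, 1)` with `p₀ + ⋯ + p_k = 1`. Then there exist a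
compact metric space `(S, d)`, a Borel probability measure `μ` on `S`, and a point `ρ ∈ S`
such that the distance distribution of `(S, d, μ)` (the pushforward of `μ ⊗ μ` under
`(x, y) ↦ dist x y`) equals `θ = p₀ • δ₀ + p₁ • δ_{d₁} + ⋯ + p_k • δ_{d_k}`, and
`dist ρ s = d_k / 2` for every point `s` in the support of `μ` (a point `s` is in the
support of `μ` iff every ball around `s` has positive measure). -/
theorem finitely_supported_distribution_is_feasible_with_root
    (k : ℕ) (d : Fin (k + 1) → ℝ) (hd0 : d 0 = 0) (hd_mono : StrictMono d)
    (p : Fin (k + 1) → ℝ) (hp : ∀ i, p i ∈ Set.Ioo (0 : ℝ) 1) (hp_sum : ∑ i, p i = 1) :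
    ∃ (S : Type) (_ : MetricSpace S) (_ : MeasurableSpace S) (_ : BorelSpace S)
      (μ : Measure S) (_ : IsProbabilityMeasure μ) (ρ : S),
      CompactSpace S ∧
      (μ.prod μ).map (fun q : S × S => dist q.1 q.2)
        = ∑ i, ENNReal.ofReal (p i) • Measure.dirac (d i) ∧
      ∀ s : S, (∀ r : ℝ, 0 < r → 0 < μ (Metric.ball s r)) →
        dist ρ s = d (Fin.last k) / 2 := by
  rcases Nat.eq_zero_or_pos k with hk0 | hk
  · subst hk0
    letI mPU : MeasurableSpace Unit := ⊤
    haveI : DiscreteTopology Unit := inferInstance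
    haveI iB : BorelSpace Unit := ⟨(borel_eq_top_of_discrete (α := Unit)).symm⟩
    haveI : MeasurableSingletonClass Unit := ⟨fun _ => MeasurableSpace.measurableSet_top⟩
    have hp0 : p 0 = 1 := by rw [← hp_sum, Fin.sum_univ_one]
    refine ⟨Unit, inferInstance, mPU, iB, Measure.dirac (), inferInstance,
      (), inferInstance, ?_, ?_⟩
    · have hf : Measurable (fun q : Unit × Unit => dist q.1 q.2) :=
        measurable_of_countable _
      rw [Measure.dirac_prod_dirac, Measure.map_dirac' hf, Fin.sum_univ_one]
      show Measure.dirac (dist () ()) = _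
      rw [dist_self, hd0, hp0, ENNReal.ofReal_one, one_smul]
    · intro s _
      rw [Subsingleton.elim s (), dist_self,
        show (Fin.last 0) = 0 from rfl, hd0]
      norm_num
  · exact main_pos k hk d hd0 hd_mono p hp hp_sum
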